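/- Let G be a live-edge model on a directed graph (V, 𝓔) and let H be a monotone nondecreasing submodular utility function with H(∅) = 0. Then for every step limit τ ≥ 0, the τ-step influence function S ↦ I^τ(S) = E_E[H(ρ^τ(E,S))] is monotone nondecreasing and submodular. -/
import Mathlib


open Finset

section LiveEdge
variable {V : Type*} [Fintype V] [DecidableEq V]

/-- One step of live-edge diffusion: a node is activated when some live edge leads
to it from an already active node. -/
def estep (E : Finset (V × V)) (A : Finset V) : Finset V :=
  A ∪ Finset.univ.filter (fun v => ∃ u ∈ A, (u, v) ∈ E)

/-- `ereach E S τ` : the set `ρ^τ(E,S)` of nodes reachable from `S` by directed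
paths of at most `τ` live edges of `E`. -/
def ereach (E : Finset (V × V)) (S : Finset V) : ℕ → Finset V
  | 0 => S
  | t + 1 => estep E (ereach E S t)

/-- Submodularity of a set function. -/
def SubmodularFn (F : Finset V → ℝ) : Prop :=
  ∀ A B : Finset V, A ⊆ B → ∀ x ∉ B, F (insert x B) - F B ≤ F (insert x A) - F A

/-- Monotone nondecreasing set function. -/
def MonotoneFn (F : Finset V → ℝ) : Prop :=
  ∀ A B : Finset V, A ⊆ B → F A ≤ F B

end LiveEdge

section Aux
variable {V : Type*} [Fintype V] [DecidableEq V]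

lemma estep_mono (E : Finset (V × V)) {A B : Finset V} (h : A ⊆ B) :
    estep E A ⊆ estep E B := by
  unfold estep
  apply Finset.union_subset_union h
  intro v hv
  simp only [Finset.mem_filter, Finset.mem_univ, true_and] at hv ⊢
  obtain ⟨u, hu, hue⟩ := hv
  exact ⟨u, h hu, hue⟩

lemma ereach_mono (E : Finset (V × V)) {A B : Finset V} (h : A ⊆ B) :
    ∀ τ, ereach E A τ ⊆ ereach E B τ
  | 0 => h
  | t + 1 => estep_mono E (ereach_mono E h t)

lemma estep_union (E : Finset (V × V)) (A B : Finset V) :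
    estep E (A ∪ B) = estep E A ∪ estep E B := by
  unfold estep
  ext v
  simp only [Finset.mem_union, Finset.mem_filter, Finset.mem_univ, true_and]
  constructor
  · rintro (h | ⟨u, (h | h), he⟩)
    · rcases h with h | h
      · exact Or.inl (Or.inl h)
      · exact Or.inr (Or.inl h)
    · exact Or.inl (Or.inr ⟨u, h, he⟩)
    · exact Or.inr (Or.inr ⟨u, h, he⟩)
  · rintro ((h | ⟨u, h, he⟩) | (h | ⟨u, h, he⟩))
    · exact Or.inl (Or.inl h)
    · exact Or.inr ⟨u, Or.inl h, he⟩
    · exact Or.inl (Or.inr h)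
    · exact Or.inr ⟨u, Or.inr h, he⟩

lemma ereach_union (E : Finset (V × V)) (A B : Finset V) :
    ∀ τ, ereach E (A ∪ B) τ = ereach E A τ ∪ ereach E B τ
  | 0 => rfl
  | t + 1 => by
    show estep E (ereach E (A ∪ B) t) = _
    rw [ereach_union E A B t, estep_union]
    rfl

/-- Diminishing returns for union sets: the key consequence of submodularity. -/
lemma submod_union {H : Finset V → ℝ} (hmono : MonotoneFn H) (hsub : SubmodularFn H)
    (C : Finset V) : ∀ X Y : Finset V, X ⊆ Y →
    H (Y ∪ C) - H Y ≤ H (X ∪ C) - H X := by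
  induction C using Finset.induction_on with
  | empty => intro X Y _; simp
  | @insert a C ha ih =>
    intro X Y hXY
    have h1 : Y ∪ insert a C = insert a (Y ∪ C) := by
      ext v; simp [or_assoc, or_comm, or_left_comm]
    have h2 : X ∪ insert a C = insert a (X ∪ C) := by
      ext v; simp [or_assoc, or_comm, or_left_comm]
    rw [h1, h2]
    have key : H (insert a (Y ∪ C)) - H (Y ∪ C) ≤ H (insert a (X ∪ C)) - H (X ∪ C) := by
      by_cases haY : a ∈ Y ∪ C
      · rw [Finset.insert_eq_self.2 haY]
        have := hmono (X ∪ C) (insert a (X ∪ C)) (Finset.subset_insert _ _)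
        linarith
      · exact hsub _ _ (Finset.union_subset_union hXY (Finset.Subset.refl C)) a haY
    have ihXY := ih X Y hXY
    linarith

end Aux

/-- **Live-edge influence functions are monotone and submodular.**  For any
live-edge model (any distribution over subsets of `𝓔`) with monotone submodular
utility `H` (`H(∅)=0`), the τ-step influence `S ↦ E_E[H(ρ^τ(E,S))]` is monotone
nondecreasing and submodular. -/
theorem liveedge_influence_submodular {V : Type*} [Fintype V] [DecidableEq V]
    (𝓔 : Finset (V × V)) (p : Finset (V × V) → ℝ)
    (hp0 : ∀ E, 0 ≤ p E) (hp1 : ∑ E : Finset (V × V), p E = 1)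
    (hsupp : ∀ E, p E ≠ 0 → E ⊆ 𝓔)
    (H : Finset V → ℝ) (hH0 : H ∅ = 0) (hHnn : ∀ S, 0 ≤ H S)
    (hHmono : MonotoneFn H) (hHsub : SubmodularFn H) (τ : ℕ) :
    MonotoneFn (fun S : Finset V => ∑ E : Finset (V × V), p E * H (ereach E S τ)) ∧
    SubmodularFn (fun S : Finset V => ∑ E : Finset (V × V), p E * H (ereach E S τ)) := by
  constructor
  · intro A B hAB
    apply Finset.sum_le_sum
    intro E _
    exact mul_le_mul_of_nonneg_left (hHmono _ _ (ereach_mono E hAB τ)) (hp0 E)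
  · intro A B hAB x hx
    simp only
    rw [← Finset.sum_sub_distrib, ← Finset.sum_sub_distrib]
    apply Finset.sum_le_sum
    intro E _
    rw [← mul_sub, ← mul_sub]
    apply mul_le_mul_of_nonneg_left _ (hp0 E)
    have hins : ∀ S : Finset V, insert x S = {x} ∪ S := by
      intro S; ext v; simp
    have hB : ereach E (insert x B) τ = ereach E B τ ∪ ereach E {x} τ := by
      rw [hins, ereach_union, Finset.union_comm]
    have hA : ereach E (insert x A) τ = ereach E A τ ∪ ereach E {x} τ := by
      rw [hins, ereach_union, Finset.union_comm]
    rw [hB, hA]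
    exact submod_union hHmono hHsub (ereach E {x} τ) _ _ (ereach_mono E hAB τ)
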